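/- The composite map θ̂ sending x to f̂(τ̂₀(x)) (first apply τ̂₀, then f̂) is an algebra automorphism of Ĥ that satisfies θ̂(â_i) = â_{i+1} for every i ∈ ℤ. -/

import Mathlib

namespace HatAlgebra

/-- Basis of the algebra `Ĥ`: vectors `â i` for `i : ℤ`, `ŝ_{0̄,j}` for `j` a positive
integer, and `ŝ_{1̄,3k}`, `ŝ_{2̄,3k}` for `k` a positive integer. -/
inductive HatB : Type
  | a : ℤ → HatB
  | s0 : ℕ+ → HatB
  | s1 : ℕ+ → HatB
  | s2 : ℕ+ → HatB
  deriving DecidableEq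

variable (F : Type*) [Field F]

/-- The underlying vector space of `Ĥ`: the free `F`-vector space on `HatB`. -/
abbrev HatH : Type _ := HatB →₀ F

/-- The basis vector `â i`. -/
noncomputable def aHat (i : ℤ) : HatH F := Finsupp.single (HatB.a i) 1

/-- The element `ŝ_{r̄,j}` of `Ĥ`, with the conventions `ŝ_{r̄,0} = 0` and
`ŝ_{1̄,j} = ŝ_{0̄,j} = ŝ_{2̄,j}` whenever `3 ∤ j`. -/
noncomputable def sHat (r : ZMod 3) (j : ℕ) : HatH F :=
  if h : j = 0 then 0
  else if h3 : 3 ∣ j then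
    if r = 0 then Finsupp.single (HatB.s0 ⟨j, Nat.pos_of_ne_zero h⟩) 1
    else if r = 1 then
      Finsupp.single (HatB.s1 ⟨j / 3,
        Nat.div_pos (Nat.le_of_dvd (Nat.pos_of_ne_zero h) h3) (by norm_num)⟩) 1
    else
      Finsupp.single (HatB.s2 ⟨j / 3,
        Nat.div_pos (Nat.le_of_dvd (Nat.pos_of_ne_zero h) h3) (by norm_num)⟩) 1
  else Finsupp.single (HatB.s0 ⟨j, Nat.pos_of_ne_zero h⟩) 1

/-- The operation `∗`: `(−1) ∗ 1̄ = −1`, `(−1) ∗ 2̄ = 1`, `0 ∗ t̄ = 0`. -/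
def hatStar (x : ℤ) (t : ZMod 3) : ℤ :=
  if x = 0 then 0 else if t = 1 then -1 else if t = 2 then 1 else 0

/-- The coefficient `(δ_{ī,r̄} − 1) ∗ (ī − r̄)` appearing in rule (Ĥ2). -/
def hatC (i r : ZMod 3) : ℤ := hatStar ((if i = r then 1 else 0) - 1) (i - r)

/-- Rule (Ĥ2): the product `â_i · ŝ_{r̄,j}`. -/
noncomputable def aMulS (i : ℤ) (r : ZMod 3) (j : ℕ) : HatH F :=
  (-2 : F) • aHat F i + (aHat F (i - (j : ℤ)) + aHat F (i + (j : ℤ))) - sHat F r j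
    - (hatC (i : ZMod 3) r : F) • (sHat F (r - 1) j - sHat F (r + 1) j)

/-- `ŝ_{0̄,n} + ŝ_{1̄,n} + ŝ_{2̄,n}`. -/
noncomputable def sSum (n : ℕ) : HatH F := sHat F 0 n + sHat F 1 n + sHat F 2 n

/-- For `r ≠ t` in `ℤ/3ℤ`, the signed sum `ŝ_{r̄,n} + ŝ_{t̄,n} − ŝ_{m̄,n}` where `m̄`
is the third residue class (appearing in rules (Ĥ5), (Ĥ6), (Ĥ7)). -/
noncomputable def sT (r t : ZMod 3) (n : ℕ) : HatH F :=
  sHat F r n + sHat F t n - sHat F (-(r + t)) n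

/-- Rules (Ĥ3)–(Ĥ7): the product `ŝ_{r̄,i} · ŝ_{t̄,j}`. -/
noncomputable def sMulS (r : ZMod 3) (i : ℕ) (t : ZMod 3) (j : ℕ) : HatH F :=
  if 3 ∣ i ∧ 3 ∣ j then
    if r = t then
      (2 : F) • (sHat F r i + sHat F r j) - (sHat F r (Nat.dist i j) + sHat F r (i + j))
    else
      (2 : F) • (sT F r t i + sT F r t j) - (sT F r t (Nat.dist i j) + sT F r t (i + j))
  else
    (2 : F) • (sHat F r i + sHat F t j) - (2 : F) • (sSum F (Nat.dist i j) + sSum F (i + j))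

/-- The product of `Ĥ` on basis vectors, given by rules (Ĥ1)–(Ĥ7) (extended
symmetrically, since the product is commutative). -/
noncomputable def mulB : HatB → HatB → HatH F
  | .a i, .a j => (-2 : F) • (aHat F i + aHat F j) + sHat F (i : ZMod 3) (i - j).natAbs
  | .a i, .s0 j => aMulS F i 0 (j : ℕ)
  | .s0 j, .a i => aMulS F i 0 (j : ℕ)
  | .a i, .s1 k => aMulS F i 1 (3 * (k : ℕ))
  | .s1 k, .a i => aMulS F i 1 (3 * (k : ℕ))
  | .a i, .s2 k => aMulS F i 2 (3 * (k : ℕ))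
  | .s2 k, .a i => aMulS F i 2 (3 * (k : ℕ))
  | .s0 i, .s0 j => sMulS F 0 (i : ℕ) 0 (j : ℕ)
  | .s0 i, .s1 k => sMulS F 0 (i : ℕ) 1 (3 * (k : ℕ))
  | .s1 k, .s0 i => sMulS F 0 (i : ℕ) 1 (3 * (k : ℕ))
  | .s0 i, .s2 k => sMulS F 0 (i : ℕ) 2 (3 * (k : ℕ))
  | .s2 k, .s0 i => sMulS F 0 (i : ℕ) 2 (3 * (k : ℕ))
  | .s1 h, .s1 k => sMulS F 1 (3 * (h : ℕ)) 1 (3 * (k : ℕ))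
  | .s1 h, .s2 k => sMulS F 1 (3 * (h : ℕ)) 2 (3 * (k : ℕ))
  | .s2 k, .s1 h => sMulS F 1 (3 * (h : ℕ)) 2 (3 * (k : ℕ))
  | .s2 h, .s2 k => sMulS F 2 (3 * (h : ℕ)) 2 (3 * (k : ℕ))

/-- The commutative bilinear product of `Ĥ`, as a bilinear map. -/
noncomputable def hatMul : HatH F →ₗ[F] HatH F →ₗ[F] HatH F :=
  Finsupp.lift (HatH F →ₗ[F] HatH F) F HatB fun x => Finsupp.lift (HatH F) F HatB (mulB F x)

/-- The product of two elements of `Ĥ`. -/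
noncomputable def hmul (x y : HatH F) : HatH F := hatMul F x y


/-- The linear map `τ̂₀`, determined on basis vectors by `â_i ↦ â_{−i}`,
`ŝ_{0̄,j} ↦ ŝ_{0̄,j}`, `ŝ_{1̄,3k} ↦ ŝ_{2̄,3k}`, `ŝ_{2̄,3k} ↦ ŝ_{1̄,3k}`. -/
noncomputable def tau0B : HatB → HatH F
  | .a i => aHat F (-i)
  | .s0 j => sHat F 0 (j : ℕ)
  | .s1 k => sHat F 2 (3 * (k : ℕ))
  | .s2 k => sHat F 1 (3 * (k : ℕ))

noncomputable def tau0 : HatH F →ₗ[F] HatH F := Finsupp.lift (HatH F) F HatB (tau0B F)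

/-- The linear map `f̂`, determined on basis vectors by `â_i ↦ â_{−i+1}`,
`ŝ_{0̄,j} ↦ ŝ_{0̄,j}` for `3 ∤ j`, `ŝ_{0̄,3k} ↦ ŝ_{1̄,3k}`, `ŝ_{1̄,3k} ↦ ŝ_{0̄,3k}`,
`ŝ_{2̄,3k} ↦ ŝ_{2̄,3k}`. -/
noncomputable def fHatB : HatB → HatH F
  | .a i => aHat F (-i + 1)
  | .s0 j => sHat F 1 (j : ℕ)
  | .s1 k => sHat F 0 (3 * (k : ℕ))
  | .s2 k => sHat F 2 (3 * (k : ℕ))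

noncomputable def fHat : HatH F →ₗ[F] HatH F := Finsupp.lift (HatH F) F HatB (fHatB F)

/-! ### Auxiliary lemmas -/

lemma lift_single {M : Type*} [AddCommMonoid M] [Module F M] (g : HatB → M) (b : HatB) (c : F) :
    Finsupp.lift M F HatB g (Finsupp.single b c) = c • g b := by
  rw [Finsupp.lift_apply, Finsupp.sum_single_index (zero_smul F (g b))]

noncomputable def theta : HatH F →ₗ[F] HatH F := (fHat F).comp (tau0 F)

lemma theta_apply (x : HatH F) : theta F x = fHat F (tau0 F x) := rfl

lemma tau0_single (b : HatB) : tau0 F (Finsupp.single b 1) = tau0B F b := by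
  rw [tau0, lift_single, one_smul]

lemma fHat_single (b : HatB) : fHat F (Finsupp.single b 1) = fHatB F b := by
  rw [fHat, lift_single, one_smul]

lemma sHat_zero' (r : ZMod 3) : sHat F r 0 = 0 := by unfold sHat; rw [dif_pos rfl]

lemma sHat_of_not_dvd (r : ZMod 3) (j : ℕ) (h : ¬ 3 ∣ j) :
    sHat F r j = sHat F 0 j := by
  have h0 : j ≠ 0 := by rintro rfl; exact h (dvd_zero 3)
  unfold sHat; rw [dif_neg h0, dif_neg h, dif_neg h0, dif_neg h]

lemma sHat_zero_eq (j : ℕ) (h : j ≠ 0) :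
    sHat F 0 j = Finsupp.single (HatB.s0 ⟨j, Nat.pos_of_ne_zero h⟩) 1 := by
  unfold sHat
  rw [dif_neg h]
  by_cases h3 : 3 ∣ j
  · rw [dif_pos h3, if_pos rfl]
  · rw [dif_neg h3]

lemma sHat_one_eq (j : ℕ) (h : j ≠ 0) (h3 : 3 ∣ j) :
    sHat F 1 j = Finsupp.single (HatB.s1 ⟨j / 3,
      Nat.div_pos (Nat.le_of_dvd (Nat.pos_of_ne_zero h) h3) (by norm_num)⟩) 1 := by
  unfold sHat
  rw [dif_neg h, dif_pos h3, if_neg (by decide : (1:ZMod 3) ≠ 0), if_pos rfl]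

lemma sHat_two_eq (j : ℕ) (h : j ≠ 0) (h3 : 3 ∣ j) :
    sHat F 2 j = Finsupp.single (HatB.s2 ⟨j / 3,
      Nat.div_pos (Nat.le_of_dvd (Nat.pos_of_ne_zero h) h3) (by norm_num)⟩) 1 := by
  unfold sHat
  rw [dif_neg h, dif_pos h3, if_neg (by decide : (2:ZMod 3) ≠ 0),
    if_neg (by decide : (2:ZMod 3) ≠ 1)]

lemma sHat_one_pnat (k : ℕ+) :
    sHat F 1 (3 * (k:ℕ)) = Finsupp.single (HatB.s1 k) 1 := by
  have h : 3 * (k:ℕ) ≠ 0 := by positivity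
  rw [sHat_one_eq F _ h ⟨k, rfl⟩]
  congr 2
  exact Subtype.ext (Nat.mul_div_cancel_left _ (by norm_num))

lemma sHat_two_pnat (k : ℕ+) :
    sHat F 2 (3 * (k:ℕ)) = Finsupp.single (HatB.s2 k) 1 := by
  have h : 3 * (k:ℕ) ≠ 0 := by positivity
  rw [sHat_two_eq F _ h ⟨k, rfl⟩]
  congr 2
  exact Subtype.ext (Nat.mul_div_cancel_left _ (by norm_num))

lemma sHat_zero_pnat (j : ℕ+) :
    sHat F 0 (j:ℕ) = Finsupp.single (HatB.s0 j) 1 := by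
  rw [sHat_zero_eq F _ j.pos.ne']
  rfl

/-! ### `theta` on basis elements -/

lemma theta_aHat (i : ℤ) : theta F (aHat F i) = aHat F (i + 1) := by
  rw [aHat, theta_apply, tau0_single]
  show fHat F (Finsupp.single (HatB.a (-i)) 1) = _
  rw [fHat_single]
  show aHat F (-(-i) + 1) = _
  rw [neg_neg]

lemma theta_single_s0 (j : ℕ+) :
    theta F (Finsupp.single (HatB.s0 j) 1) = sHat F 1 (j:ℕ) := by
  rw [theta_apply, tau0_single]
  show fHat F (sHat F 0 (j:ℕ)) = _
  rw [sHat_zero_pnat, fHat_single]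
  rfl

lemma theta_single_s1 (k : ℕ+) :
    theta F (Finsupp.single (HatB.s1 k) 1) = sHat F 2 (3 * (k:ℕ)) := by
  rw [theta_apply, tau0_single]
  show fHat F (sHat F 2 (3 * (k:ℕ))) = _
  rw [sHat_two_pnat, fHat_single]
  rw [show fHatB F (HatB.s2 k) = sHat F 2 (3 * (k:ℕ)) from rfl, sHat_two_pnat]

lemma theta_single_s2 (k : ℕ+) :
    theta F (Finsupp.single (HatB.s2 k) 1) = sHat F 0 (3 * (k:ℕ)) := by
  rw [theta_apply, tau0_single]
  show fHat F (sHat F 1 (3 * (k:ℕ))) = _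
  rw [sHat_one_pnat, fHat_single]
  rfl

lemma zmod3_cases : ∀ r : ZMod 3, r = 0 ∨ r = 1 ∨ r = 2 := by decide

lemma theta_sHat (r : ZMod 3) (n : ℕ) : theta F (sHat F r n) = sHat F (r + 1) n := by
  rcases eq_or_ne n 0 with rfl | h0
  · rw [sHat_zero', sHat_zero', map_zero]
  by_cases h3 : 3 ∣ n
  · obtain ⟨m, rfl⟩ := h3
    have hm : m ≠ 0 := by rintro rfl; simp at h0
    set k : ℕ+ := ⟨m, Nat.pos_of_ne_zero hm⟩ with hk
    have hmk : m = (k:ℕ) := rfl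
    rcases zmod3_cases r with rfl | rfl | rfl
    · erw [sHat_zero_eq F _ h0, theta_single_s0]
      show sHat F 1 (3*m) = _
      rw [zero_add]
    · rw [hmk, sHat_one_pnat, theta_single_s1]
      rfl
    · rw [hmk, sHat_two_pnat, theta_single_s2]
      rw [show (2 + 1 : ZMod 3) = 0 from rfl]
  · erw [sHat_of_not_dvd F r n h3, sHat_of_not_dvd F (r+1) n h3,
      sHat_zero_eq F n h0, theta_single_s0]
    show sHat F 1 n = _
    rw [sHat_of_not_dvd F 1 n h3, sHat_zero_eq F n h0]

/-! ### `theta` on the structure constants -/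

lemma theta_sSum (n : ℕ) : theta F (sSum F n) = sSum F n := by
  unfold sSum
  rw [map_add, map_add, theta_sHat, theta_sHat, theta_sHat,
    show (0+1 : ZMod 3) = 1 from rfl, show (1+1 : ZMod 3) = 2 from rfl,
    show (2+1 : ZMod 3) = 0 from rfl]
  abel

lemma neg_add_shift : ∀ a b : ZMod 3, -(a + b) + 1 = -(a + 1 + (b + 1)) := by decide

lemma theta_sT (r t : ZMod 3) (n : ℕ) : theta F (sT F r t n) = sT F (r+1) (t+1) n := by
  unfold sT
  rw [map_sub, map_add, theta_sHat, theta_sHat, theta_sHat, neg_add_shift]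

lemma hatC_shift : ∀ a r : ZMod 3, hatC (a + 1) (r + 1) = hatC a r := by decide

lemma theta_aMulS (i : ℤ) (r : ZMod 3) (j : ℕ) :
    theta F (aMulS F i r j) = aMulS F (i+1) (r+1) j := by
  unfold aMulS
  rw [map_sub, map_sub, map_add, map_add, map_smul, map_smul, map_sub,
    theta_aHat, theta_aHat, theta_aHat, theta_sHat, theta_sHat, theta_sHat,
    show i - (j:ℤ) + 1 = i + 1 - j by ring, show i + (j:ℤ) + 1 = i + 1 + j by ring,
    show r - 1 + 1 = (r + 1) - 1 by ring,
    show ((i+1 : ℤ) : ZMod 3) = (i : ZMod 3) + 1 by push_cast; ring,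
    hatC_shift]

lemma theta_sMulS (r t : ZMod 3) (i j : ℕ) :
    theta F (sMulS F r i t j) = sMulS F (r+1) i (t+1) j := by
  unfold sMulS
  by_cases h : 3 ∣ i ∧ 3 ∣ j
  · rw [if_pos h, if_pos h]
    by_cases hrt : r = t
    · subst hrt
      rw [if_pos rfl, if_pos rfl, map_sub, map_smul, map_add, map_add,
        theta_sHat, theta_sHat, theta_sHat, theta_sHat]
    · rw [if_neg hrt, if_neg (fun hh => hrt (by exact add_right_cancel hh)),
        map_sub, map_smul, map_add, map_add, theta_sT, theta_sT, theta_sT, theta_sT]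
  · rw [if_neg h, if_neg h, map_sub, map_smul, map_smul, map_add, map_add,
      theta_sHat, theta_sHat, theta_sSum, theta_sSum]

/-! ### Invariance lemmas -/

lemma sT_comm (r t : ZMod 3) (n : ℕ) : sT F r t n = sT F t r n := by
  unfold sT; rw [add_comm (sHat F r n), add_comm r t]

lemma sMulS_comm (r t : ZMod 3) (i j : ℕ) : sMulS F r i t j = sMulS F t j r i := by
  unfold sMulS
  by_cases h : 3 ∣ i ∧ 3 ∣ j
  · have h' : 3 ∣ j ∧ 3 ∣ i := ⟨h.2, h.1⟩
    rw [if_pos h, if_pos h']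
    by_cases hrt : r = t
    · subst hrt
      rw [if_pos rfl, if_pos rfl, Nat.dist_comm, Nat.add_comm, add_comm (sHat F r i)]
    · rw [if_neg hrt, if_neg (Ne.symm hrt)]
      simp only [sT_comm F r t]
      rw [Nat.dist_comm, Nat.add_comm, add_comm (sT F t r i)]
  · rw [if_neg h, if_neg (fun hh => h ⟨hh.2, hh.1⟩), Nat.dist_comm, Nat.add_comm,
      add_comm (sHat F r i)]

lemma sMulS_eq_of (r t r' t' : ZMod 3) (i j : ℕ) (h : ¬ (3 ∣ i ∧ 3 ∣ j))
    (hi : sHat F r i = sHat F r' i) (hj : sHat F t j = sHat F t' j) :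
    sMulS F r i t j = sMulS F r' i t' j := by
  unfold sMulS; rw [if_neg h, if_neg h, hi, hj]

lemma aMulS_eq_of (i : ℤ) (r t : ZMod 3) (j : ℕ) (h : ¬ 3 ∣ j) :
    aMulS F i r j = aMulS F i t j := by
  unfold aMulS
  rw [sHat_of_not_dvd F r j h, sHat_of_not_dvd F t j h, sHat_of_not_dvd F (r-1) j h,
    sHat_of_not_dvd F (r+1) j h, sHat_of_not_dvd F (t-1) j h, sHat_of_not_dvd F (t+1) j h]
  simp

lemma hmul_single (b c : HatB) :
    hmul F (Finsupp.single b 1) (Finsupp.single c 1) = mulB F b c := by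
  rw [hmul, hatMul, lift_single, one_smul, lift_single, one_smul]

/-! ### `theta` on singles, explicit forms -/

lemma theta_single_a' (i : ℤ) :
    theta F (Finsupp.single (HatB.a i) 1) = Finsupp.single (HatB.a (i+1)) 1 :=
  theta_aHat F i

lemma theta_single_s0_dvd (j : ℕ+) (h3 : 3 ∣ (j:ℕ)) :
    theta F (Finsupp.single (HatB.s0 j) 1) =
      Finsupp.single (HatB.s1 ⟨(j:ℕ)/3,
        Nat.div_pos (Nat.le_of_dvd j.pos h3) (by norm_num)⟩) 1 := by
  rw [theta_single_s0, sHat_one_eq F _ j.pos.ne' h3]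

lemma theta_single_s0_not_dvd (j : ℕ+) (h3 : ¬ 3 ∣ (j:ℕ)) :
    theta F (Finsupp.single (HatB.s0 j) 1) = Finsupp.single (HatB.s0 j) 1 := by
  rw [theta_single_s0, sHat_of_not_dvd F 1 _ h3, sHat_zero_pnat]

lemma theta_single_s1' (k : ℕ+) :
    theta F (Finsupp.single (HatB.s1 k) 1) = Finsupp.single (HatB.s2 k) 1 := by
  rw [theta_single_s1, sHat_two_pnat]

lemma theta_single_s2' (k : ℕ+) :
    theta F (Finsupp.single (HatB.s2 k) 1) =
      Finsupp.single (HatB.s0 ⟨3 * (k:ℕ), by positivity⟩) 1 := by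
  rw [theta_single_s2, sHat_zero_eq F _ (by positivity)]

lemma one_one : (1 + 1 : ZMod 3) = 2 := by decide
lemma two_one : (2 + 1 : ZMod 3) = 0 := by decide

set_option maxHeartbeats 1000000 in
lemma theta_mulB (b c : HatB) :
    theta F (mulB F b c) = hmul F (theta F (Finsupp.single b 1)) (theta F (Finsupp.single c 1)) := by
  obtain i | j | k | k := b <;> obtain i' | j' | k' | k' := c
  -- a, a
  · rw [theta_single_a', theta_single_a', hmul_single]
    simp only [mulB]
    rw [map_add, map_smul, map_add, theta_aHat, theta_aHat, theta_sHat,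
      show ((i+1 : ℤ) : ZMod 3) = (i : ZMod 3) + 1 by push_cast; ring,
      show (i + 1 - (i' + 1) : ℤ) = i - i' by ring]
  -- a, s0
  · by_cases h3 : 3 ∣ (j' : ℕ)
    · rw [theta_single_a', theta_single_s0_dvd F j' h3, hmul_single]
      simp only [mulB]
      rw [theta_aMulS, PNat.mk_coe, Nat.mul_div_cancel' h3, zero_add]
    · rw [theta_single_a', theta_single_s0_not_dvd F j' h3, hmul_single]
      simp only [mulB]
      rw [theta_aMulS]
      exact aMulS_eq_of F (i+1) (0+1) 0 _ h3
  -- a, s1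
  · rw [theta_single_a', theta_single_s1', hmul_single]
    simp only [mulB]
    rw [theta_aMulS, one_one]
  -- a, s2
  · rw [theta_single_a', theta_single_s2', hmul_single]
    simp only [mulB]
    rw [theta_aMulS, PNat.mk_coe, two_one]
  -- s0, a
  · by_cases h3 : 3 ∣ (j : ℕ)
    · rw [theta_single_s0_dvd F j h3, theta_single_a', hmul_single]
      simp only [mulB]
      rw [theta_aMulS, PNat.mk_coe, Nat.mul_div_cancel' h3, zero_add]
    · rw [theta_single_s0_not_dvd F j h3, theta_single_a', hmul_single]
      simp only [mulB]
      rw [theta_aMulS]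
      exact aMulS_eq_of F (i'+1) (0+1) 0 _ h3
  -- s0, s0
  · by_cases h3 : 3 ∣ (j : ℕ) <;> by_cases h3' : 3 ∣ (j' : ℕ)
    · rw [theta_single_s0_dvd F j h3, theta_single_s0_dvd F j' h3', hmul_single]
      simp only [mulB]
      rw [theta_sMulS, zero_add, PNat.mk_coe, PNat.mk_coe, Nat.mul_div_cancel' h3,
        Nat.mul_div_cancel' h3']
    · rw [theta_single_s0_dvd F j h3, theta_single_s0_not_dvd F j' h3', hmul_single]
      simp only [mulB]
      rw [theta_sMulS, zero_add, PNat.mk_coe, Nat.mul_div_cancel' h3, sMulS_comm]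
      exact sMulS_eq_of F 1 1 0 1 _ _ (fun hh => h3' hh.1)
        (by rw [sHat_of_not_dvd F 1 _ h3']) rfl
    · rw [theta_single_s0_not_dvd F j h3, theta_single_s0_dvd F j' h3', hmul_single]
      simp only [mulB]
      rw [theta_sMulS, zero_add, PNat.mk_coe, Nat.mul_div_cancel' h3']
      exact sMulS_eq_of F 1 1 0 1 _ _ (fun hh => h3 hh.1)
        (by rw [sHat_of_not_dvd F 1 _ h3]) rfl
    · rw [theta_single_s0_not_dvd F j h3, theta_single_s0_not_dvd F j' h3', hmul_single]
      simp only [mulB]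
      rw [theta_sMulS, zero_add]
      exact sMulS_eq_of F 1 1 0 0 _ _ (fun hh => h3 hh.1)
        (by rw [sHat_of_not_dvd F 1 _ h3]) (by rw [sHat_of_not_dvd F 1 _ h3'])
  -- s0, s1
  · by_cases h3 : 3 ∣ (j : ℕ)
    · rw [theta_single_s0_dvd F j h3, theta_single_s1', hmul_single]
      simp only [mulB]
      rw [theta_sMulS, zero_add, one_one, PNat.mk_coe, Nat.mul_div_cancel' h3]
    · rw [theta_single_s0_not_dvd F j h3, theta_single_s1', hmul_single]
      simp only [mulB]
      rw [theta_sMulS, zero_add, one_one]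
      exact sMulS_eq_of F 1 2 0 2 _ _ (fun hh => h3 hh.1)
        (by rw [sHat_of_not_dvd F 1 _ h3]) rfl
  -- s0, s2
  · by_cases h3 : 3 ∣ (j : ℕ)
    · rw [theta_single_s0_dvd F j h3, theta_single_s2', hmul_single]
      simp only [mulB]
      rw [theta_sMulS, zero_add, two_one, PNat.mk_coe, PNat.mk_coe, Nat.mul_div_cancel' h3]
      exact sMulS_comm F 1 0 _ _
    · rw [theta_single_s0_not_dvd F j h3, theta_single_s2', hmul_single]
      simp only [mulB]
      rw [theta_sMulS, zero_add, two_one, PNat.mk_coe]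
      exact sMulS_eq_of F 1 0 0 0 _ _ (fun hh => h3 hh.1)
        (by rw [sHat_of_not_dvd F 1 _ h3]) rfl
  -- s1, a
  · rw [theta_single_s1', theta_single_a', hmul_single]
    simp only [mulB]
    rw [theta_aMulS, one_one]
  -- s1, s0
  · by_cases h3 : 3 ∣ (j' : ℕ)
    · rw [theta_single_s1', theta_single_s0_dvd F j' h3, hmul_single]
      simp only [mulB]
      rw [theta_sMulS, zero_add, one_one, PNat.mk_coe, Nat.mul_div_cancel' h3]
    · rw [theta_single_s1', theta_single_s0_not_dvd F j' h3, hmul_single]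
      simp only [mulB]
      rw [theta_sMulS, zero_add, one_one]
      exact sMulS_eq_of F 1 2 0 2 _ _ (fun hh => h3 hh.1)
        (by rw [sHat_of_not_dvd F 1 _ h3]) rfl
  -- s1, s1
  · rw [theta_single_s1', theta_single_s1', hmul_single]
    simp only [mulB]
    rw [theta_sMulS, one_one]
  -- s1, s2
  · rw [theta_single_s1', theta_single_s2', hmul_single]
    simp only [mulB]
    rw [theta_sMulS, one_one, two_one, PNat.mk_coe]
    exact sMulS_comm F 2 0 _ _
  -- s2, a
  · rw [theta_single_s2', theta_single_a', hmul_single]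
    simp only [mulB]
    rw [theta_aMulS, two_one, PNat.mk_coe]
  -- s2, s0
  · by_cases h3 : 3 ∣ (j' : ℕ)
    · rw [theta_single_s2', theta_single_s0_dvd F j' h3, hmul_single]
      simp only [mulB]
      rw [theta_sMulS, zero_add, two_one, PNat.mk_coe, PNat.mk_coe, Nat.mul_div_cancel' h3]
      exact sMulS_comm F 1 0 _ _
    · rw [theta_single_s2', theta_single_s0_not_dvd F j' h3, hmul_single]
      simp only [mulB]
      rw [theta_sMulS, zero_add, two_one, PNat.mk_coe, sMulS_comm]
      exact sMulS_eq_of F 0 1 0 0 _ _ (fun hh => h3 hh.2) rfl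
        (by rw [sHat_of_not_dvd F 1 _ h3])
  -- s2, s1
  · rw [theta_single_s2', theta_single_s1', hmul_single]
    simp only [mulB]
    rw [theta_sMulS, one_one, two_one, PNat.mk_coe]
    exact sMulS_comm F 2 0 _ _
  -- s2, s2
  · rw [theta_single_s2', theta_single_s2', hmul_single]
    simp only [mulB]
    rw [theta_sMulS, two_one, PNat.mk_coe, PNat.mk_coe]

lemma theta_hmul (x y : HatH F) :
    theta F (hmul F x y) = hmul F (theta F x) (theta F y) := by
  have h : (hatMul F).compr₂ (theta F) = (hatMul F).compl₁₂ (theta F) (theta F) := by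
    refine Finsupp.lhom_ext' fun b => LinearMap.ext_ring
      (Finsupp.lhom_ext' fun c => LinearMap.ext_ring ?_)
    simp only [LinearMap.compr₂_apply, LinearMap.compl₁₂_apply, LinearMap.coe_comp,
      Function.comp_apply, Finsupp.lsingle_apply]
    rw [show ((hatMul F) (Finsupp.single b 1)) (Finsupp.single c 1) = mulB F b c from
      hmul_single F b c]
    exact theta_mulB F b c
  simpa [LinearMap.compr₂_apply, LinearMap.compl₁₂_apply, hmul] using
    DFunLike.congr_fun (DFunLike.congr_fun h x) y

/-! ### The inverse of `theta` -/

noncomputable def gB : HatB → HatH F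
  | .a i => aHat F (i - 1)
  | .s0 j => if 3 ∣ (j:ℕ) then sHat F 2 (j:ℕ) else Finsupp.single (.s0 j) 1
  | .s1 k => Finsupp.single (.s0 (3 * k)) 1
  | .s2 k => Finsupp.single (.s1 k) 1

noncomputable def gMap : HatH F →ₗ[F] HatH F := Finsupp.lift (HatH F) F HatB (gB F)

lemma gMap_single (b : HatB) : gMap F (Finsupp.single b 1) = gB F b := by
  rw [gMap, lift_single, one_smul]

lemma g_theta (x : HatH F) : gMap F (theta F x) = x := by
  have h : (gMap F).comp (theta F) = LinearMap.id := by
    apply Finsupp.lhom_ext'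
    intro b
    apply LinearMap.ext_ring
    simp only [LinearMap.coe_comp, Function.comp_apply, Finsupp.lsingle_apply,
      LinearMap.id_coe, id_eq]
    obtain i | j | k | k := b
    · rw [theta_single_a', gMap_single]
      show aHat F (i + 1 - 1) = _
      rw [add_sub_cancel_right]
      rfl
    · by_cases h3 : 3 ∣ (j : ℕ)
      · rw [theta_single_s0_dvd F j h3, gMap_single]
        show Finsupp.single (HatB.s0 (3 * ⟨(j:ℕ)/3, _⟩)) 1 = _
        congr 2
        apply PNat.coe_injective
        erw [PNat.mul_coe, PNat.mk_coe]
        show 3 * ((j:ℕ)/3) = (j:ℕ)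
        exact Nat.mul_div_cancel' h3
      · rw [theta_single_s0_not_dvd F j h3, gMap_single]
        show (if 3 ∣ (j:ℕ) then sHat F 2 (j:ℕ) else Finsupp.single (.s0 j) 1) = _
        rw [if_neg h3]
    · rw [theta_single_s1', gMap_single]
      rfl
    · rw [theta_single_s2', gMap_single]
      show (if 3 ∣ ((⟨3 * (k:ℕ), _⟩ : ℕ+):ℕ) then
          sHat F 2 ((⟨3 * (k:ℕ), _⟩ : ℕ+):ℕ) else _) = _
      rw [if_pos (show (3:ℕ) ∣ _ from ⟨(k:ℕ), rfl⟩)]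
      show sHat F 2 (3 * (k:ℕ)) = _
      rw [sHat_two_pnat]
  exact DFunLike.congr_fun h x

lemma theta_g (x : HatH F) : theta F (gMap F x) = x := by
  have h : (theta F).comp (gMap F) = LinearMap.id := by
    apply Finsupp.lhom_ext'
    intro b
    apply LinearMap.ext_ring
    simp only [LinearMap.coe_comp, Function.comp_apply, Finsupp.lsingle_apply,
      LinearMap.id_coe, id_eq]
    obtain i | j | k | k := b
    · rw [gMap_single]
      show theta F (Finsupp.single (HatB.a (i - 1)) 1) = _
      rw [theta_single_a', sub_add_cancel]
    · rw [gMap_single]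
      by_cases h3 : 3 ∣ (j : ℕ)
      · show theta F (if 3 ∣ (j:ℕ) then sHat F 2 (j:ℕ) else _) = _
        erw [if_pos h3, sHat_two_eq F _ j.pos.ne' h3, theta_single_s2']
        congr 2
        apply PNat.coe_injective
        rw [PNat.mk_coe]
        show 3 * ((j:ℕ)/3) = (j:ℕ)
        exact Nat.mul_div_cancel' h3
      · show theta F (if 3 ∣ (j:ℕ) then sHat F 2 (j:ℕ) else Finsupp.single (.s0 j) 1) = _
        rw [if_neg h3, theta_single_s0_not_dvd F j h3]
    · rw [gMap_single]
      show theta F (Finsupp.single (HatB.s0 (3 * k)) 1) = _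
      have h3 : 3 ∣ ((3 * k : ℕ+) : ℕ) := by
        rw [PNat.mul_coe]
        exact ⟨k, rfl⟩
      rw [theta_single_s0_dvd F _ h3]
      congr 2
      apply PNat.coe_injective
      rw [PNat.mk_coe, PNat.mul_coe]
      show (((3:ℕ+):ℕ) * (k:ℕ)) / 3 = (k:ℕ)
      rw [show ((3:ℕ+):ℕ) = 3 from rfl]
      exact Nat.mul_div_cancel_left _ (by norm_num)
    · rw [gMap_single]
      show theta F (Finsupp.single (HatB.s1 k) 1) = _
      rw [theta_single_s1']
  exact DFunLike.congr_fun h x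

/-- The composite `θ̂ = f̂ ∘ τ̂₀` is an algebra automorphism of `Ĥ` with
`θ̂(â_i) = â_{i+1}` for every `i ∈ ℤ`. -/
theorem theta_automorphism [CharP F 5] :
    Function.Bijective (fun x : HatH F => fHat F (tau0 F x)) ∧
      (∀ x y : HatH F, fHat F (tau0 F (hmul F x y)) =
        hmul F (fHat F (tau0 F x)) (fHat F (tau0 F y))) ∧
      ∀ i : ℤ, fHat F (tau0 F (aHat F i)) = aHat F (i + 1) := by
  refine ⟨Function.bijective_iff_has_inverse.mpr ⟨gMap F, g_theta F, theta_g F⟩, ?_, ?_⟩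
  · intro x y
    exact theta_hmul F x y
  · intro i
    exact theta_aHat F i

end HatAlgebra
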